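/- Let d > 0 and M > 0, and let (a_k)_{k≥1} be a sequence of positive real numbers such that a_k ≤ k! · (1/d^{k+1} + (log(k+3))^k) · M for all k ≥ 1. Then ∑_{k=1}^∞ a_k^{−1/k} = ∞. -/

import Mathlib

open scoped ENNReal

noncomputable section

lemma one_le_log_three : (1 : ℝ) ≤ Real.log 3 := by
  rw [Real.le_log_iff_exp_le (by norm_num)]
  calc Real.exp 1 ≤ 2.7182818286 := Real.exp_one_lt_d9.le
    _ ≤ 3 := by norm_num

lemma not_summable_aux :
    ¬ Summable (fun n : ℕ => ((n : ℝ) * Real.log ((n : ℝ) + 3))⁻¹) := by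
  set f : ℕ → ℝ := fun n => ((n : ℝ) * Real.log ((n : ℝ) + 3))⁻¹ with hf
  have hlog : ∀ n : ℕ, (1 : ℝ) ≤ Real.log ((n : ℝ) + 3) := fun n =>
    one_le_log_three.trans (Real.log_le_log (by norm_num)
      (by have := (Nat.cast_nonneg n : (0:ℝ) ≤ n); linarith))
  have h_nonneg : ∀ n, 0 ≤ f n := fun n => by
    have := hlog n; positivity
  have h_mono : ∀ ⦃m n : ℕ⦄, 0 < m → m ≤ n → f n ≤ f m := by
    intro m n hm hmn
    have hm1 : (1 : ℝ) ≤ (m : ℝ) := by exact_mod_cast hm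
    have hmn' : (m : ℝ) ≤ (n : ℝ) := by exact_mod_cast hmn
    have h1 : (0 : ℝ) < (m : ℝ) * Real.log ((m : ℝ) + 3) := by
      have := hlog m; nlinarith
    have h2 : (m : ℝ) * Real.log ((m : ℝ) + 3) ≤ (n : ℝ) * Real.log ((n : ℝ) + 3) := by
      have := hlog m
      have hle : Real.log ((m : ℝ) + 3) ≤ Real.log ((n : ℝ) + 3) :=
        Real.log_le_log (by positivity) (by linarith)
      nlinarith
    exact inv_anti₀ h1 h2
  intro hs
  have hcond : Summable (fun n : ℕ => 2 ^ n * f (2 ^ n)) :=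
    (summable_condensed_iff_of_nonneg h_nonneg h_mono).mpr hs
  -- 2^n * f (2^n) = (log (2^n + 3))⁻¹ ≥ ((n+2) * log 2)⁻¹
  have key : ∀ n : ℕ, (((n : ℝ) + 2) * Real.log 2)⁻¹ ≤ 2 ^ n * f (2 ^ n) := by
    intro n
    have h2n : (0 : ℝ) < (2 : ℝ) ^ n := by positivity
    have hcast : ((2 ^ n : ℕ) : ℝ) = (2 : ℝ) ^ n := by push_cast; ring
    have hfval : f (2 ^ n) = ((2 : ℝ) ^ n * Real.log ((2 : ℝ) ^ n + 3))⁻¹ := by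
      simp [hf, hcast]
    have hsimp : (2:ℝ) ^ n * ((2 : ℝ) ^ n * Real.log ((2 : ℝ) ^ n + 3))⁻¹
        = (Real.log ((2 : ℝ) ^ n + 3))⁻¹ := by
      rw [mul_inv, ← mul_assoc, mul_inv_cancel₀ (ne_of_gt h2n), one_mul]
    rw [hfval, hsimp]
    have hlog2 : (0 : ℝ) < Real.log ((2:ℝ) ^ n + 3) := by
      have : (1:ℝ) ≤ Real.log ((2:ℝ)^n + 3) := by
        refine one_le_log_three.trans (Real.log_le_log (by norm_num) (by linarith))
      linarith
    refine inv_anti₀ hlog2 ?_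
    have hub : (2:ℝ) ^ n + 3 ≤ (2:ℝ) ^ (n + 2) := by
      have h1 : (1:ℝ) ≤ (2:ℝ) ^ n := one_le_pow₀ (by norm_num)
      rw [pow_add]
      nlinarith
    calc Real.log ((2:ℝ) ^ n + 3) ≤ Real.log ((2:ℝ) ^ (n + 2)) :=
          Real.log_le_log (by positivity) hub
      _ = ((n : ℝ) + 2) * Real.log 2 := by
          rw [Real.log_pow]; push_cast; ring
  have hsum2 : Summable (fun n : ℕ => (((n : ℝ) + 2) * Real.log 2)⁻¹) := by
    refine Summable.of_nonneg_of_le (fun n => ?_) key hcond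
    have hl2 : (0:ℝ) < Real.log 2 := Real.log_pos (by norm_num)
    positivity
  have hl2 : Real.log 2 ≠ 0 := ne_of_gt (Real.log_pos (by norm_num))
  have hsum3 : Summable (fun n : ℕ => ((n : ℝ) + 2)⁻¹) := by
    have := hsum2.mul_left (Real.log 2)
    refine this.congr fun n => ?_
    have h : ((n : ℝ) + 2) ≠ 0 := by positivity
    field_simp
  have hsum4 : Summable (fun n : ℕ => ((n : ℝ))⁻¹) := by
    have : Summable (fun n : ℕ => (((n + 2 : ℕ)) : ℝ)⁻¹) := by
      refine hsum3.congr fun n => ?_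
      push_cast; ring_nf
    exact (summable_nat_add_iff 2).mp this
  exact Real.not_summable_natCast_inv hsum4

/-- (The series estimate from the proof of Theorem 4.6 of the paper.)  If
`a_k ≤ k! ⬝ (1/d^{k+1} + (log(k+3))^k) ⬝ M` for all `k ≥ 1`, with `a_k, d, M > 0`, then
`∑_{k≥1} a_k^{-1/k} = ∞` (the sum taken in `[0, ∞]`). -/
theorem sum_inv_root_diverges (d M : ℝ) (hd : 0 < d) (hM : 0 < M)
    (a : ℕ → ℝ) (hpos : ∀ k : ℕ, 1 ≤ k → 0 < a k)
    (hbound : ∀ k : ℕ, 1 ≤ k →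
      a k ≤ (k.factorial : ℝ) * (1 / d ^ (k + 1) + Real.log ((k : ℝ) + 3) ^ k) * M) :
    ∑' k : ℕ, ENNReal.ofReal ((a (k + 1)) ^ (-(1 : ℝ) / ((k : ℝ) + 1))) = ⊤ := by
  set c : ℝ := max 1 d⁻¹ with hc
  have hc1 : (1 : ℝ) ≤ c := le_max_left _ _
  have hcd : d⁻¹ ≤ c := le_max_right _ _
  have hc0 : (0 : ℝ) < c := lt_of_lt_of_le one_pos hc1
  set A : ℝ := max 1 (M * (c + 1)) with hA
  have hA1 : (1 : ℝ) ≤ A := le_max_left _ _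
  have hA0 : (0 : ℝ) < A := lt_of_lt_of_le one_pos hA1
  set B : ℝ := A * c with hB
  have hB1 : (1 : ℝ) ≤ B := by rw [hB]; nlinarith
  have hB0 : (0 : ℝ) < B := lt_of_lt_of_le one_pos hB1
  -- key bound : a k ≤ (B * k * log (k+3)) ^ k  for 1 ≤ k
  have hlog : ∀ k : ℕ, (1 : ℝ) ≤ Real.log ((k : ℝ) + 3) := fun k =>
    one_le_log_three.trans (Real.log_le_log (by norm_num)
      (by have := (Nat.cast_nonneg k : (0:ℝ) ≤ k); linarith))
  have hlog4 : ∀ k : ℕ, (1 : ℝ) ≤ Real.log ((k : ℝ) + 4) := fun k =>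
    one_le_log_three.trans (Real.log_le_log (by norm_num)
      (by have := (Nat.cast_nonneg k : (0:ℝ) ≤ k); linarith))
  have hkey : ∀ k : ℕ, 1 ≤ k → a k ≤ (B * (k : ℝ) * Real.log ((k : ℝ) + 3)) ^ k := by
    intro k hk
    have hl := hlog k
    have hk1 : (1 : ℝ) ≤ (k : ℝ) := by exact_mod_cast hk
    have hfact : ((k.factorial : ℕ) : ℝ) ≤ (k : ℝ) ^ k := by
      exact_mod_cast Nat.factorial_le_pow k
    have h1 : 1 / d ^ (k + 1) ≤ c * (c * Real.log ((k : ℝ) + 3)) ^ k := by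
      have : 1 / d ^ (k + 1) = d⁻¹ ^ (k + 1) := by
        rw [one_div, inv_pow]
      rw [this, pow_succ']
      have hd' : (0 : ℝ) ≤ d⁻¹ := by positivity
      refine mul_le_mul hcd ?_ (by positivity) (by linarith)
      calc d⁻¹ ^ k ≤ c ^ k := pow_le_pow_left₀ hd' hcd k
        _ ≤ (c * Real.log ((k : ℝ) + 3)) ^ k := by
            refine pow_le_pow_left₀ (by positivity) ?_ k
            nlinarith
    have h2 : Real.log ((k : ℝ) + 3) ^ k ≤ (c * Real.log ((k : ℝ) + 3)) ^ k := by
      refine pow_le_pow_left₀ (by linarith) ?_ k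
      nlinarith
    have hbd := hbound k hk
    have hstep : a k ≤ (k : ℝ) ^ k * ((c + 1) * (c * Real.log ((k : ℝ) + 3)) ^ k) * M := by
      refine hbd.trans ?_
      have hsum : 1 / d ^ (k + 1) + Real.log ((k : ℝ) + 3) ^ k
          ≤ (c + 1) * (c * Real.log ((k : ℝ) + 3)) ^ k := by
        have : (c + 1) * (c * Real.log ((k : ℝ) + 3)) ^ k
            = c * (c * Real.log ((k : ℝ) + 3)) ^ k + (c * Real.log ((k : ℝ) + 3)) ^ k := by ring
        rw [this]
        exact add_le_add h1 h2
      have hfk : (0 : ℝ) ≤ (k.factorial : ℝ) := by positivity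
      have h3 : (k.factorial : ℝ) * (1 / d ^ (k + 1) + Real.log ((k : ℝ) + 3) ^ k)
          ≤ (k : ℝ) ^ k * ((c + 1) * (c * Real.log ((k : ℝ) + 3)) ^ k) := by
        refine mul_le_mul hfact hsum ?_ (by positivity)
        have : (0:ℝ) < d ^ (k+1) := by positivity
        positivity
      exact mul_le_mul_of_nonneg_right h3 hM.le
    refine hstep.trans ?_
    have hexp : (B * (k : ℝ) * Real.log ((k : ℝ) + 3)) ^ k
        = A ^ k * ((k : ℝ) ^ k * (c * Real.log ((k : ℝ) + 3)) ^ k) := by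
      rw [hB]
      rw [show A * c * (k : ℝ) * Real.log ((k : ℝ) + 3)
          = A * ((k : ℝ) * (c * Real.log ((k : ℝ) + 3))) by ring]
      rw [mul_pow, mul_pow]
    rw [hexp]
    have hMA : M * (c + 1) ≤ A := le_max_right _ _
    have hAk : A ≤ A ^ k := le_self_pow₀ hA1 (by omega)
    calc (k : ℝ) ^ k * ((c + 1) * (c * Real.log ((k : ℝ) + 3)) ^ k) * M
        = (M * (c + 1)) * ((k : ℝ) ^ k * (c * Real.log ((k : ℝ) + 3)) ^ k) := by ring
      _ ≤ A ^ k * ((k : ℝ) ^ k * (c * Real.log ((k : ℝ) + 3)) ^ k) := by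
          refine mul_le_mul_of_nonneg_right (hMA.trans hAk) ?_
          positivity
  -- lower bound for the terms
  have hterm : ∀ k : ℕ,
      (B * ((k : ℝ) + 1) * Real.log ((k : ℝ) + 4))⁻¹
        ≤ (a (k + 1)) ^ (-(1 : ℝ) / ((k : ℝ) + 1)) := by
    intro k
    set n : ℕ := k + 1 with hn
    have hncast : ((n : ℕ) : ℝ) = (k : ℝ) + 1 := by push_cast [hn]; ring
    have hn3 : ((n : ℕ) : ℝ) + 3 = (k : ℝ) + 4 := by rw [hncast]; ring
    have hl : (1 : ℝ) ≤ Real.log ((k : ℝ) + 4) := hlog4 k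
    have hx0 : (0 : ℝ) < B * ((k : ℝ) + 1) * Real.log ((k : ℝ) + 4) := by
      have hk1 : (0:ℝ) < (k:ℝ) + 1 := by positivity
      exact mul_pos (mul_pos hB0 hk1) (by linarith)
    have han : 0 < a n := hpos n (by omega)
    have hbound' : a n ≤ (B * ((k : ℝ) + 1) * Real.log ((k : ℝ) + 4)) ^ n := by
      have := hkey n (by omega)
      rw [hncast] at this
      rwa [show (k:ℝ) + 1 + 3 = (k:ℝ) + 4 by ring] at this
    have hroot : a n ^ ((1 : ℝ) / ((k : ℝ) + 1)) ≤ B * ((k : ℝ) + 1) * Real.log ((k : ℝ) + 4) := by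
      have h1 : a n ^ ((1 : ℝ) / ((k : ℝ) + 1))
          ≤ ((B * ((k : ℝ) + 1) * Real.log ((k : ℝ) + 4)) ^ n) ^ ((1 : ℝ) / ((k : ℝ) + 1)) :=
        Real.rpow_le_rpow han.le hbound' (by positivity)
      refine h1.trans_eq ?_
      rw [← Real.rpow_natCast (B * ((k : ℝ) + 1) * Real.log ((k : ℝ) + 4)) n,
        ← Real.rpow_mul hx0.le, hncast, mul_one_div, div_self (by positivity), Real.rpow_one]
    rw [neg_div, Real.rpow_neg han.le]
    refine inv_anti₀ ?_ hroot
    positivity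
  -- conclude
  by_contra h
  have hsum := ENNReal.summable_toReal h
  have hb : Summable (fun k : ℕ => (a (k + 1)) ^ (-(1 : ℝ) / ((k : ℝ) + 1))) := by
    refine hsum.congr fun k => ?_
    rw [ENNReal.toReal_ofReal]
    exact Real.rpow_nonneg (hpos (k + 1) (by omega)).le _
  have hg : Summable (fun k : ℕ => (B * ((k : ℝ) + 1) * Real.log ((k : ℝ) + 4))⁻¹) := by
    refine Summable.of_nonneg_of_le (fun k => ?_) hterm hb
    have := hlog4 k
    positivity
  -- transform to the aux series
  have hg2 : Summable (fun k : ℕ => (((k : ℝ) + 1) * Real.log ((k : ℝ) + 4))⁻¹) := by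
    have := hg.mul_left B
    refine this.congr fun k => ?_
    have h1 : (1 : ℝ) ≤ Real.log ((k : ℝ) + 4) := hlog4 k
    have h2 : ((k : ℝ) + 1) ≠ 0 := by positivity
    have h3 : Real.log ((k : ℝ) + 4) ≠ 0 := by linarith
    field_simp
  have hg3 : Summable (fun n : ℕ => ((n : ℝ) * Real.log ((n : ℝ) + 3))⁻¹) := by
    refine (summable_nat_add_iff 1).mp ?_
    refine hg2.congr fun k => ?_
    push_cast
    rw [show (k:ℝ) + 1 + 3 = (k:ℝ) + 4 by ring]
  exact not_summable_aux hg3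

end
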